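/- Let d ≥ 1 and let ℓ_d = arccos(−1/(d+1)) be the geodesic arclength between two vertices of the regular (d+1)-dimensional simplex inscribed in S^d. Then for every ε with 0 < ε < ℓ_d and every finite (ε/4)-net X of S^d, the chromatic number of the ε-distance graph D_{X,ε}(ℓ_d) is at least d+3. -/

import Mathlib

open scoped RealInnerProductSpace

/-- Geodesic distance `arccos ⟨x, y⟩` on the unit sphere in `ℝ^n`. -/
noncomputable def gd {n : ℕ} (x y : EuclideanSpace ℝ (Fin n)) : ℝ :=
  Real.arccos (inner ℝ x y : ℝ)

lemma gd_comm {n : ℕ} (x y : EuclideanSpace ℝ (Fin n)) : gd x y = gd y x := by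
  rw [gd, gd, real_inner_comm]

/-- The unit sphere `S^d ⊆ ℝ^{d+1}`. -/
noncomputable def unitSphere (d : ℕ) : Set (EuclideanSpace ℝ (Fin (d + 1))) :=
  Metric.sphere 0 1

/-- `X` is an `r`-net of `S^d`: every point of the sphere is within geodesic
distance `r` of a point of `X`. -/
def IsNet (d : ℕ) (r : ℝ) (X : Set (EuclideanSpace ℝ (Fin (d + 1)))) : Prop :=
  ∀ y ∈ unitSphere d, ∃ x ∈ X, gd x y ≤ r

/-- The ε-distance graph with parameter α on a set `X ⊆ ℝ^n`: distinct points are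
adjacent iff their geodesic distance lies in `[α - ε, α + ε]`. -/
noncomputable def distGraph {n : ℕ} (X : Set (EuclideanSpace ℝ (Fin n))) (α ε : ℝ) :
    SimpleGraph X where
  Adj x y := x ≠ y ∧ α - ε ≤ gd x.1 y.1 ∧ gd x.1 y.1 ≤ α + ε
  symm := by
    refine ⟨fun x y h => ?_⟩
    exact ⟨h.1.symm, by rw [gd_comm]; exact h.2.1, by rw [gd_comm]; exact h.2.2⟩
  loopless := ⟨fun x h => h.1 rfl⟩

open Real
variable {n : ℕ}

lemma inner_le_one {x y : EuclideanSpace ℝ (Fin n)} (hx : ‖x‖ = 1) (hy : ‖y‖ = 1) :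
    |(inner ℝ x y : ℝ)| ≤ 1 := by
  have := abs_real_inner_le_norm x y
  rwa [hx, hy, mul_one] at this

lemma gd_nonneg (x y : EuclideanSpace ℝ (Fin n)) : 0 ≤ gd x y := Real.arccos_nonneg _

lemma gd_le_pi (x y : EuclideanSpace ℝ (Fin n)) : gd x y ≤ π := Real.arccos_le_pi _

lemma gd_self (x : EuclideanSpace ℝ (Fin n)) (hx : ‖x‖ = 1) : gd x x = 0 := by
  rw [gd, real_inner_self_eq_norm_sq, hx]; simp [Real.arccos_one]

lemma cos_gd {x y : EuclideanSpace ℝ (Fin n)} (hx : ‖x‖ = 1) (hy : ‖y‖ = 1) :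
    Real.cos (gd x y) = (inner ℝ x y : ℝ) := by
  have h := abs_le.1 (inner_le_one hx hy)
  exact Real.cos_arccos h.1 h.2

lemma sin_gd {x y : EuclideanSpace ℝ (Fin n)} :
    Real.sin (gd x y) = Real.sqrt (1 - (inner ℝ x y : ℝ)^2) := by
  rw [gd, Real.sin_arccos]

/-- Triangle inequality for geodesic distance on the unit sphere. -/
lemma gd_triangle {x y z : EuclideanSpace ℝ (Fin n)}
    (hx : ‖x‖ = 1) (hy : ‖y‖ = 1) (hz : ‖z‖ = 1) : gd x z ≤ gd x y + gd y z := by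
  by_cases hπ : π ≤ gd x y + gd y z
  · exact le_trans (gd_le_pi x z) hπ
  push_neg at hπ
  have hab0 : 0 ≤ gd x y + gd y z := add_nonneg (gd_nonneg _ _) (gd_nonneg _ _)
  -- reduce to cosine comparison
  have key : Real.cos (gd x y + gd y z) ≤ (inner ℝ x z : ℝ) := by
    rw [Real.cos_add, cos_gd hx hy, cos_gd hy hz, sin_gd, sin_gd]
    set c : ℝ := inner ℝ x y
    set e : ℝ := inner ℝ y z
    have hyy : (inner ℝ y y : ℝ) = 1 := by rw [real_inner_self_eq_norm_sq, hy]; norm_num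
    have hinner : (inner ℝ x z : ℝ) - c * e = inner ℝ (x - c • y) (z - e • y) := by
      simp only [inner_sub_left, inner_sub_right, real_inner_smul_left, real_inner_smul_right]
      rw [hyy, real_inner_comm y x]
      show (inner ℝ x z : ℝ) - c * e = _
      simp only [c, e]
      rw [real_inner_comm y x]
      ring
    have hxx : (inner ℝ x x : ℝ) = 1 := by rw [real_inner_self_eq_norm_sq, hx]; norm_num
    have hzz : (inner ℝ z z : ℝ) = 1 := by rw [real_inner_self_eq_norm_sq, hz]; norm_num
    have h1 : ‖x - c • y‖ = Real.sqrt (1 - c^2) := by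
      rw [show (1 : ℝ) - c^2 = ‖x - c • y‖^2 by
        rw [← real_inner_self_eq_norm_sq]
        simp only [inner_sub_left, inner_sub_right, real_inner_smul_left, real_inner_smul_right]
        rw [hyy, hxx, real_inner_comm y x]
        show (1:ℝ) - c^2 = _
        simp only [c]
        rw [real_inner_comm y x]
        ring]
      rw [Real.sqrt_sq (norm_nonneg _)]
    have h2 : ‖z - e • y‖ = Real.sqrt (1 - e^2) := by
      rw [show (1 : ℝ) - e^2 = ‖z - e • y‖^2 by
        rw [← real_inner_self_eq_norm_sq]
        simp only [inner_sub_left, inner_sub_right, real_inner_smul_left, real_inner_smul_right]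
        rw [hyy, hzz, real_inner_comm z y]
        show (1:ℝ) - e^2 = _
        simp only [e]
        rw [real_inner_comm z y]
        ring]
      rw [Real.sqrt_sq (norm_nonneg _)]
    have habs : |(inner ℝ (x - c • y) (z - e • y) : ℝ)| ≤ Real.sqrt (1 - c^2) * Real.sqrt (1 - e^2) := by
      rw [← h1, ← h2]; exact abs_real_inner_le_norm _ _
    have := (abs_le.1 habs).1
    nlinarith [this, hinner]
  have harc : Real.arccos (inner ℝ x z : ℝ) ≤ Real.arccos (Real.cos (gd x y + gd y z)) := by
    unfold Real.arccos
    have := Real.monotone_arcsin key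
    linarith
  calc gd x z = Real.arccos (inner ℝ x z : ℝ) := rfl
    _ ≤ Real.arccos (Real.cos (gd x y + gd y z)) := harc
    _ = gd x y + gd y z := Real.arccos_cos hab0 hπ.le

/-- There exist `d+2` unit vectors in `ℝ^{d+1}` with pairwise inner product `-1/(d+1)`,
the vertices of a regular simplex. -/
lemma simplex_full (d : ℕ) :
    ∃ w : Fin (d + 2) → EuclideanSpace ℝ (Fin (d + 1)),
      (∀ i, ‖w i‖ = 1) ∧
      (∀ i j, i ≠ j → (inner ℝ (w i) (w j) : ℝ) = -(1 / (d + 1))) := by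
  classical
  set k : ℝ := (d : ℝ) + 2 with hk
  have hk0 : (0:ℝ) < k := by positivity
  have hd0 : (0:ℝ) ≤ (d:ℝ) := Nat.cast_nonneg d
  have hk1 : (0:ℝ) < k - 1 := by rw [hk]; linarith
  -- ambient space
  set E := EuclideanSpace ℝ (Fin (d + 2))
  let o : E := WithLp.toLp 2 (fun _ => 1)
  have hoo : (inner ℝ o o : ℝ) = k := by
    rw [PiLp.inner_apply]
    simp [o, Finset.sum_const, hk]
  let e : Fin (d + 2) → E := fun i => EuclideanSpace.single i 1
  have hee : ∀ i j, (inner ℝ (e i) (e j) : ℝ) = if i = j then 1 else 0 := by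
    intro i j
    show (inner ℝ (EuclideanSpace.single i (1:ℝ)) (EuclideanSpace.single j (1:ℝ)) : ℝ) = _
    rw [EuclideanSpace.inner_single_left]
    simp [EuclideanSpace.single_apply, eq_comm]
  have heo : ∀ i, (inner ℝ (e i) o : ℝ) = 1 := by
    intro i
    show (inner ℝ (EuclideanSpace.single i (1:ℝ)) (WithLp.toLp 2 (fun _ => (1:ℝ)) : EuclideanSpace ℝ (Fin (d+2))) : ℝ) = 1
    rw [EuclideanSpace.inner_single_left]
    simp
  have hoe : ∀ i, (inner ℝ o (e i) : ℝ) = 1 := by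
    intro i; rw [real_inner_comm]; exact heo i
  let u : Fin (d + 2) → E := fun i => e i - (1 / k) • o
  have huu : ∀ i j, (inner ℝ (u i) (u j) : ℝ) =
      (if i = j then 1 else 0) - 1 / k := by
    intro i j
    simp only [u, inner_sub_left, inner_sub_right, real_inner_smul_left,
      real_inner_smul_right, hee, heo, hoe, hoo]
    field_simp
    ring
  have huo : ∀ i, (inner ℝ (u i) o : ℝ) = 0 := by
    intro i
    simp only [u, inner_sub_left, real_inner_smul_left, heo, hoo]
    field_simp
    norm_num
  -- normalized
  set s : ℝ := Real.sqrt (k / (k - 1)) with hs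
  have hs0 : 0 < s := Real.sqrt_pos.2 (by positivity)
  have hs2 : s ^ 2 = k / (k - 1) := Real.sq_sqrt (by positivity)
  let w' : Fin (d + 2) → E := fun i => s • u i
  have hw'w' : ∀ i j, (inner ℝ (w' i) (w' j) : ℝ) =
      (k / (k - 1)) * ((if i = j then 1 else 0) - 1 / k) := by
    intro i j
    simp only [w', real_inner_smul_left, real_inner_smul_right, huu]
    rw [← mul_assoc, ← sq, hs2]
  have hw'unit : ∀ i, ‖w' i‖ = 1 := by
    intro i
    have : (inner ℝ (w' i) (w' i) : ℝ) = 1 := by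
      rw [hw'w']
      simp
      field_simp
    have hn : (1:ℝ) = ‖w' i‖ * ‖w' i‖ := by rw [← this, real_inner_self_eq_norm_mul_norm]
    nlinarith [norm_nonneg (w' i)]
  have hw'o : ∀ i, w' i ∈ (ℝ ∙ o)ᗮ := by
    intro i
    rw [Submodule.mem_orthogonal_singleton_iff_inner_right]
    rw [real_inner_comm]  -- maybe needed
    simp only [w', real_inner_smul_left, huo, mul_zero]
  -- the orthogonal complement has dimension d+1
  haveI : Fact (Module.finrank ℝ E = (d + 1) + 1) :=
    ⟨by simp [E, finrank_euclideanSpace_fin]⟩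
  have ho0 : o ≠ 0 := by
    intro h
    have : (o : E) 0 = 0 := by rw [h]; rfl
    simp [o] at this
  have hrank : Module.finrank ℝ ((ℝ ∙ o)ᗮ : Submodule ℝ E) = d + 1 :=
    Submodule.finrank_orthogonal_span_singleton ho0
  let B : OrthonormalBasis (Fin (d + 1)) ℝ ((ℝ ∙ o)ᗮ : Submodule ℝ E) :=
    (stdOrthonormalBasis ℝ _).reindex (finCongr hrank)
  let φ := B.repr
  refine ⟨fun i => φ ⟨w' i, hw'o i⟩, ?_, ?_⟩
  · intro i
    rw [φ.norm_map]
    exact hw'unit i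
  · intro i j hij
    rw [φ.inner_map_map]
    have : (inner ℝ (⟨w' i, hw'o i⟩ : ((ℝ ∙ o)ᗮ : Submodule ℝ E)) ⟨w' j, hw'o j⟩ : ℝ)
        = (inner ℝ (w' i) (w' j) : ℝ) := rfl
    rw [this, hw'w' i j, if_neg hij]
    have : k - 1 = (d : ℝ) + 1 := by simp [hk]; ring
    field_simp [this]
    ring

lemma simplex_apex (d : ℕ) (a : EuclideanSpace ℝ (Fin (d + 1))) (ha : ‖a‖ = 1) :
    ∃ v : Fin (d + 1) → EuclideanSpace ℝ (Fin (d + 1)),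
      (∀ i, ‖v i‖ = 1) ∧
      (∀ i j, i ≠ j → (inner ℝ (v i) (v j) : ℝ) = -(1 / (d + 1))) ∧
      (∀ i, (inner ℝ (v i) a : ℝ) = -(1 / (d + 1))) := by
  obtain ⟨w, hw1, hw2⟩ := simplex_full d
  set b := w (Fin.last (d + 1)) with hb
  have hba : ‖b‖ = ‖a‖ := by rw [hw1, ha]
  set f := Submodule.reflection (ℝ ∙ (b - a))ᗮ with hf
  have hfb : f b = a := Submodule.reflection_sub hba
  refine ⟨fun i => f (w i.castSucc), ?_, ?_, ?_⟩
  · intro i; rw [f.norm_map]; exact hw1 _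
  · intro i j hij
    rw [f.inner_map_map]
    exact hw2 _ _ (fun h => hij (Fin.castSucc_injective _ h))
  · intro i
    rw [← hfb, f.inner_map_map]
    exact hw2 _ _ (Fin.ne_last_of_lt (Fin.castSucc_lt_last i))



lemma gd_quad {n : ℕ} {x y z w : EuclideanSpace ℝ (Fin n)}
    (hx : ‖x‖ = 1) (hy : ‖y‖ = 1) (hz : ‖z‖ = 1) (hw : ‖w‖ = 1) :
    gd x w ≤ gd x y + gd y z + gd z w :=
  le_trans (gd_triangle hx hy hw) (by linarith [gd_triangle hy hz hw])

lemma unit_mem_sphere {d : ℕ} {x : EuclideanSpace ℝ (Fin (d + 1))} (hx : ‖x‖ = 1) :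
    x ∈ unitSphere d := by
  simp [unitSphere, mem_sphere_zero_iff_norm, hx]

lemma mem_sphere_unit {d : ℕ} {x : EuclideanSpace ℝ (Fin (d + 1))} (hx : x ∈ unitSphere d) :
    ‖x‖ = 1 := by
  simpa [unitSphere, mem_sphere_zero_iff_norm] using hx

/-- The forcing lemma: any two net points within `3ε/4` of a common sphere point get
the same color in any proper `(d+2)`-coloring. -/
lemma forcing (d : ℕ) (ε α : ℝ) (hε0 : 0 < ε) (hεα : ε < α)
    (hαdef : α = Real.arccos (-(1 / (d + 1))))
    (X : Set (EuclideanSpace ℝ (Fin (d + 1)))) (hXS : X ⊆ unitSphere d)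
    (hnet : IsNet d (ε / 4) X)
    (C : (distGraph X α ε).Coloring (Fin (d + 2)))
    (a : EuclideanSpace ℝ (Fin (d + 1))) (ha : ‖a‖ = 1)
    (y z : X) (hy : gd y.1 a ≤ 3 * ε / 4) (hz : gd z.1 a ≤ 3 * ε / 4) :
    C y = C z := by
  classical
  have hα0 : 0 < α := hε0.trans hεα
  obtain ⟨v, hv1, hv2, hv3⟩ := simplex_apex d a ha
  have hgvv : ∀ i j, i ≠ j → gd (v i) (v j) = α := by
    intro i j hij; rw [gd, hv2 i j hij, hαdef]
  have hgva : ∀ i, gd (v i) a = α := by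
    intro i; rw [gd, hv3 i, hαdef]
  choose t ht1 ht2 using fun i => hnet (v i) (unit_mem_sphere (hv1 i))
  set T : Fin (d + 1) → X := fun i => ⟨t i, ht1 i⟩ with hT
  have hXu : ∀ x : X, ‖x.1‖ = 1 := fun x => mem_sphere_unit (hXS x.2)
  have htu : ∀ i, ‖t i‖ = 1 := fun i => hXu (T i)
  have hαε : 0 < α - ε := by linarith
  -- T i and T j are adjacent for i ≠ j
  have hadjTT : ∀ i j, i ≠ j → (distGraph X α ε).Adj (T i) (T j) := by
    intro i j hij
    have hup := gd_quad (htu i) (hv1 i) (hv1 j) (htu j)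
    have hlow := gd_quad (hv1 i) (htu i) (htu j) (hv1 j)
    have e1 := gd_comm (v j) (t j)
    have e2 := gd_comm (v i) (t i)
    have e3 := hgvv i j hij
    have hne : T i ≠ T j := by
      intro h
      have h0 : gd (t i) (t j) = 0 := by
        rw [show t i = t j from congrArg Subtype.val h]
        exact gd_self _ (htu j)
      rw [h0] at hlow
      linarith [ht2 i, ht2 j]
    exact ⟨hne, by dsimp [distGraph, T]; constructor <;> linarith [ht2 i, ht2 j]⟩
  -- T i is adjacent to y and to z
  have hadjy : ∀ (p : X), gd p.1 a ≤ 3 * ε / 4 → ∀ i, (distGraph X α ε).Adj (T i) p := by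
    intro p hp i
    have hup := gd_quad (htu i) (hv1 i) ha (hXu p)
    have hlow := gd_quad (hv1 i) (htu i) (hXu p) ha
    have e1 := gd_comm (v i) (t i)
    have e2 := gd_comm a p.1
    have e3 := hgva i
    have hne : T i ≠ p := by
      intro h
      have h0 : gd (t i) p.1 = 0 := by
        rw [show t i = p.1 from congrArg Subtype.val h]
        exact gd_self _ (hXu p)
      rw [h0] at hlow
      linarith [ht2 i]
    exact ⟨hne, by dsimp [distGraph, T]; constructor <;> linarith [ht2 i]⟩
  -- color counting
  have hinj : Function.Injective (fun i => C (T i)) := by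
    intro i j h
    by_contra hij
    exact C.valid (hadjTT i j hij) h
  set S : Finset (Fin (d + 2)) := Finset.image (fun i => C (T i)) Finset.univ with hS
  have hcard : S.card = d + 1 := by
    rw [hS, Finset.card_image_of_injective _ hinj, Finset.card_univ, Fintype.card_fin]
  have hycompl : ∀ (p : X), gd p.1 a ≤ 3 * ε / 4 → C p ∈ Sᶜ := by
    intro p hp
    rw [Finset.mem_compl]
    intro hmem
    rw [hS, Finset.mem_image] at hmem
    obtain ⟨i, -, hi⟩ := hmem
    exact C.valid (hadjy p hp i) hi
  have hcompl : Sᶜ.card = 1 := by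
    rw [Finset.card_compl, hcard, Fintype.card_fin]
    simp
  exact Finset.card_le_one.1 hcompl.le _ (hycompl y hy) _ (hycompl z hz)

/-- with `ℓ_d = arccos(-1/(d+1))` the side arclength of the regular inscribed
`(d+1)`-simplex, `χ(D_{X,ε}(ℓ_d)) ≥ d + 3` for every finite `(ε/4)`-net `X` of `S^d`. -/
theorem stmt_3 (d : ℕ) (hd : 1 ≤ d) (ε : ℝ) (hε0 : 0 < ε)
    (hεα : ε < Real.arccos (-(1 / (d + 1))))
    (X : Set (EuclideanSpace ℝ (Fin (d + 1)))) (hXS : X ⊆ unitSphere d)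
    (hXfin : X.Finite) (hnet : IsNet d (ε / 4) X) :
    (d + 3 : ℕ) ≤ (distGraph X (Real.arccos (-(1 / (d + 1)))) ε).chromaticNumber := by
  classical
  set α := Real.arccos (-(1 / (d + 1))) with hαdef
  have hα0 : 0 < α := hε0.trans hεα
  have hαπ : α ≤ π := Real.arccos_le_pi _
  -- it suffices to show that the graph is not (d+2)-colorable
  have hnc : ¬ (distGraph X α ε).Colorable (d + 2) := by
    rintro ⟨C⟩
    -- a base point of the net
    have hp₀ : ‖(EuclideanSpace.single (0 : Fin (d + 1)) (1 : ℝ))‖ = 1 := by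
      rw [EuclideanSpace.norm_single]; norm_num
    obtain ⟨x₀, hx₀X, -⟩ :=
      hnet (EuclideanSpace.single (0 : Fin (d + 1)) (1 : ℝ)) (unit_mem_sphere hp₀)
    have hx₀ : ‖x₀‖ = 1 := mem_sphere_unit (hXS hx₀X)
    have hx₀0 : x₀ ≠ 0 := by intro h; rw [h, norm_zero] at hx₀; norm_num at hx₀
    -- a unit vector orthogonal to x₀
    haveI : Fact (Module.finrank ℝ (EuclideanSpace ℝ (Fin (d + 1))) = d + 1) :=
      ⟨finrank_euclideanSpace_fin⟩
    have hrank : Module.finrank ℝ ((ℝ ∙ x₀)ᗮ : Submodule ℝ (EuclideanSpace ℝ (Fin (d + 1)))) = d :=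
      Submodule.finrank_orthogonal_span_singleton hx₀0
    have hnebot : ((ℝ ∙ x₀)ᗮ : Submodule ℝ (EuclideanSpace ℝ (Fin (d + 1)))) ≠ ⊥ := by
      intro h
      rw [h, finrank_bot] at hrank
      omega
    obtain ⟨u', hu'mem, hu'0⟩ := Submodule.exists_mem_ne_zero_of_ne_bot hnebot
    set u : EuclideanSpace ℝ (Fin (d + 1)) := (‖u'‖⁻¹ : ℝ) • u' with hu
    have huunit : ‖u‖ = 1 := norm_smul_inv_norm hu'0
    have hx₀u : (inner ℝ x₀ u : ℝ) = 0 := by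
      have := Submodule.mem_orthogonal_singleton_iff_inner_right.1 hu'mem
      rw [hu, real_inner_smul_right, this, mul_zero]
    have hux₀ : (inner ℝ u x₀ : ℝ) = 0 := by rw [real_inner_comm]; exact hx₀u
    have hx₀x₀ : (inner ℝ x₀ x₀ : ℝ) = 1 := by
      rw [real_inner_self_eq_norm_sq, hx₀]; norm_num
    have huu : (inner ℝ u u : ℝ) = 1 := by
      rw [real_inner_self_eq_norm_sq, huunit]; norm_num
    -- the discrete geodesic
    set N : ℕ := max 1 ⌈2 * α / ε⌉₊ with hN
    have hN1 : 1 ≤ N := le_max_left _ _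
    have hNR : (0:ℝ) < N := by
      have : (1:ℝ) ≤ N := by exact_mod_cast hN1
      linarith
    have hNceil : 2 * α / ε ≤ N := by
      calc 2 * α / ε ≤ (⌈2 * α / ε⌉₊ : ℝ) := Nat.le_ceil _
        _ ≤ N := by exact_mod_cast le_max_right _ _
    set θ : ℝ := α / N with hθ
    have hθ0 : 0 ≤ θ := by positivity
    have hθε : θ ≤ ε / 2 := by
      rw [hθ, div_le_div_iff₀ hNR (by norm_num : (0:ℝ) < 2)]
      have h2 : 2 * α ≤ ε * N := by
        rw [div_le_iff₀ hε0] at hNceil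
        linarith [hNceil]
      linarith
    have hθα : θ ≤ α := by
      rw [hθ]
      calc α / N ≤ α / 1 := by
            apply div_le_div_of_nonneg_left hα0.le (by norm_num) (by exact_mod_cast hN1)
        _ = α := by norm_num
    have hNθ : (N : ℝ) * θ = α := by
      rw [hθ]; field_simp
    set g : ℕ → EuclideanSpace ℝ (Fin (d + 1)) :=
      fun k => Real.cos (k * θ) • x₀ + Real.sin (k * θ) • u with hg
    have hgg : ∀ k l : ℕ, (inner ℝ (g k) (g l) : ℝ) = Real.cos ((k : ℝ) * θ - l * θ) := by
      intro k l
      simp only [hg, inner_add_left, inner_add_right, real_inner_smul_left,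
        real_inner_smul_right, hx₀x₀, huu, hx₀u, hux₀, Real.cos_sub]
      ring
    have hgunit : ∀ k, ‖g k‖ = 1 := by
      intro k
      have h1 : (inner ℝ (g k) (g k) : ℝ) = 1 := by rw [hgg]; simp
      have hn : (1:ℝ) = ‖g k‖ * ‖g k‖ := by rw [← h1, real_inner_self_eq_norm_mul_norm]
      nlinarith [norm_nonneg (g k)]
    have hg0 : g 0 = x₀ := by simp [hg]
    have hstep : ∀ k : ℕ, gd (g (k + 1)) (g k) = θ := by
      intro k
      rw [gd, hgg, show ((k + 1 : ℕ) : ℝ) * θ - (k : ℝ) * θ = θ by push_cast; ring]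
      exact Real.arccos_cos hθ0 (hθα.trans hαπ)
    have hgend : gd (g 0) (g N) = α := by
      rw [gd, hgg, show ((0 : ℕ) : ℝ) * θ - (N : ℝ) * θ = -α by rw [hNθ]; push_cast; ring,
        Real.cos_neg]
      exact Real.arccos_cos hα0.le hαπ
    set x₀s : X := ⟨x₀, hx₀X⟩ with hx₀s
    -- the chain of net points of the same color
    have key : ∀ k : ℕ, k ≤ N → ∃ p : X, gd p.1 (g k) ≤ ε / 4 ∧ C p = C x₀s := by
      intro k
      induction k with
      | zero =>
        intro _
        refine ⟨x₀s, ?_, rfl⟩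
        rw [hg0]
        have := gd_self x₀ hx₀
        simp only [hx₀s]
        rw [this]
        linarith
      | succ k ih =>
        intro hk
        obtain ⟨p, hp1, hp2⟩ := ih (Nat.le_of_succ_le hk)
        obtain ⟨q, hqX, hq⟩ := hnet (g (k + 1)) (unit_mem_sphere (hgunit (k + 1)))
        refine ⟨⟨q, hqX⟩, hq, ?_⟩
        have hforce := forcing d ε α hε0 hεα hαdef X hXS hnet C (g k) (hgunit k)
          p ⟨q, hqX⟩ (by linarith) ?_
        · rw [← hforce, hp2]
        · have htri := gd_triangle (mem_sphere_unit (hXS hqX)) (hgunit (k + 1)) (hgunit k)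
          have := hstep k
          linarith [htri, hq]
    obtain ⟨p, hp1, hp2⟩ := key N le_rfl
    -- x₀ and p are adjacent yet share a color: contradiction
    have hxp_up : gd x₀ p.1 ≤ α + ε := by
      have htri := gd_triangle hx₀ (hgunit N) (mem_sphere_unit (hXS p.2))
      have hcm := gd_comm p.1 (g N)
      rw [← hg0] at htri ⊢
      linarith [hgend]
    have hxp_low : α - ε ≤ gd x₀ p.1 := by
      have htri := gd_triangle hx₀ (mem_sphere_unit (hXS p.2)) (hgunit N)
      rw [← hg0] at *
      linarith [hgend, hp1]
    have hne : x₀s ≠ p := by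
      intro h
      have h0 : gd x₀ p.1 = 0 := by
        rw [show x₀ = p.1 from congrArg Subtype.val h]
        exact gd_self _ (mem_sphere_unit (hXS p.2))
      rw [h0] at hxp_low
      linarith
    exact C.valid ⟨hne, hxp_low, hxp_up⟩ hp2.symm
  -- conclude the bound on the chromatic number
  have hlt : ((d + 2 : ℕ) : ℕ∞) < (distGraph X α ε).chromaticNumber := by
    by_contra hle
    push_neg at hle
    exact hnc ((SimpleGraph.chromaticNumber_le_iff_colorable).1 hle)
  have : ((d + 2 : ℕ) : ℕ∞) + 1 ≤ (distGraph X α ε).chromaticNumber :=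
    (ENat.add_one_le_iff (by exact_mod_cast ENat.coe_ne_top _)).2 hlt
  calc ((d + 3 : ℕ) : ℕ∞) = ((d + 2 : ℕ) : ℕ∞) + 1 := by push_cast; ring
    _ ≤ _ := this
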